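/- Assume that every diagonal entry of B is nonzero and every row of B̃ is nonzero. Let D be the diagonal part of B and R = B − D. Let sequences x₁^(k) ∈ ℝ^m and x₂^(k) ∈ ℝ^p satisfy, for all k ≥ 0: x₂^(k+1) = x₂^(k) + s(B̃)·d^(k) with d^(k)_i = (b_i − B_i·x₁^(k) − B̃_i·x₂^(k))/(m·‖B̃_i‖₁), and x₁^(k+1) = D⁻¹·(−R·x₁^(k) + b − B̃·x₂^(k+1)). If ‖I − B·D⁻¹‖₁ · ‖I − (1/m)·B̃·s(B̃)·N(B̃)⁻¹‖₁ < 1 (ℓ1 operator norms), then the sequence (x₁^(k), x₂^(k)) is a Cauchy sequence in ℝ^m × ℝ^p; hence it converges to a limit (x₁, x₂), and this limit solves the system: B·x₁ + B̃·x₂ = b. -/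

import Mathlib

/-- The ℓ1-norm of a vector: sum of absolute values of its entries. -/
noncomputable def vecL1 {n : ℕ} (v : Fin n → ℝ) : ℝ := ∑ i, |v i|

/-- The ℓ1 operator norm of a matrix: the maximum absolute column sum. -/
noncomputable def matL1 {a c : ℕ} (M : Matrix (Fin a) (Fin c) ℝ) : ℝ :=
  ⨆ j, ∑ i, |M i j|

lemma vecL1_nonneg {n : ℕ} (v : Fin n → ℝ) : 0 ≤ vecL1 v :=
  Finset.sum_nonneg fun _ _ => abs_nonneg _

lemma abs_le_vecL1 {n : ℕ} (v : Fin n → ℝ) (i : Fin n) : |v i| ≤ vecL1 v :=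
  Finset.single_le_sum (fun j _ => abs_nonneg (v j)) (Finset.mem_univ i)

lemma col_le_matL1 {a c : ℕ} (M : Matrix (Fin a) (Fin c) ℝ) (j : Fin c) :
    ∑ i, |M i j| ≤ matL1 M :=
  le_ciSup (f := fun j => ∑ i, |M i j|)
    (Set.Finite.bddAbove (Set.finite_range _)) j

lemma matL1_nonneg {a c : ℕ} (M : Matrix (Fin a) (Fin c) ℝ) (j : Fin c) : 0 ≤ matL1 M :=
  le_trans (Finset.sum_nonneg fun _ _ => abs_nonneg _) (col_le_matL1 M j)

lemma vecL1_smul {n : ℕ} (c : ℝ) (v : Fin n → ℝ) : vecL1 (c • v) = |c| * vecL1 v := by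
  simp [vecL1, abs_mul, Finset.mul_sum]

lemma vecL1_mulVec_le {a c : ℕ} (M : Matrix (Fin a) (Fin c) ℝ) (v : Fin c → ℝ) :
    vecL1 (M.mulVec v) ≤ matL1 M * vecL1 v := by
  have h1 : vecL1 (M.mulVec v) = ∑ i, |∑ j, M i j * v j| := by
    simp [vecL1, Matrix.mulVec, dotProduct]
  rw [h1]
  calc ∑ i, |∑ j, M i j * v j| ≤ ∑ i, ∑ j, |M i j * v j| :=
        Finset.sum_le_sum fun i _ => Finset.abs_sum_le_sum_abs _ _
    _ = ∑ j, (∑ i, |M i j|) * |v j| := by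
        rw [Finset.sum_comm]
        simp [abs_mul, Finset.sum_mul]
    _ ≤ ∑ j, matL1 M * |v j| :=
        Finset.sum_le_sum fun j _ =>
          mul_le_mul_of_nonneg_right (col_le_matL1 M j) (abs_nonneg _)
    _ = matL1 M * vecL1 v := by rw [← Finset.mul_sum]; rfl

/-- if `‖I − B D⁻¹‖₁ ‖I − (1/m) B̃ s N⁻¹‖₁ < 1`, then the generalized
Jacobi iterates form a Cauchy sequence, hence converge to a limit `(y₁, y₂)`, and
that limit solves `B y₁ + B̃ y₂ = b`. -/
theorem generalized_jacobi_converges_to_solution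
    (m p : ℕ) (hm : 0 < m) (hp : 0 < p)
    (B : Matrix (Fin m) (Fin m) ℝ) (Bt : Matrix (Fin m) (Fin p) ℝ) (b : Fin m → ℝ)
    (hDiag : ∀ i, B i i ≠ 0) (hRows : ∀ i, Bt i ≠ 0)
    (s : Matrix (Fin p) (Fin m) ℝ) (hs : ∀ j i, s j i = Real.sign (Bt i j))
    (N : Matrix (Fin m) (Fin m) ℝ)
    (hN : N = Matrix.diagonal (fun i => ∑ j, |Bt i j|))
    (D : Matrix (Fin m) (Fin m) ℝ) (hD : D = Matrix.diagonal (fun i => B i i))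
    (R : Matrix (Fin m) (Fin m) ℝ) (hR : R = B - D)
    (x₁ : ℕ → Fin m → ℝ) (x₂ : ℕ → Fin p → ℝ)
    (d : ℕ → Fin m → ℝ)
    (hd : ∀ k i, d k i = (b i - (B.mulVec (x₁ k)) i - (Bt.mulVec (x₂ k)) i) /
      ((m : ℝ) * ∑ j, |Bt i j|))
    (hx₂ : ∀ k, x₂ (k + 1) = x₂ k + s.mulVec (d k))
    (hx₁ : ∀ k, x₁ (k + 1) = D⁻¹.mulVec (-(R.mulVec (x₁ k)) + (b - Bt.mulVec (x₂ (k + 1)))))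
    (hq1 : matL1 (1 - B * D⁻¹) * matL1 (1 - (1 / (m : ℝ)) • (Bt * s * N⁻¹)) < 1) :
    CauchySeq (fun k => (x₁ k, x₂ k)) ∧
    ∃ y₁ : Fin m → ℝ, ∃ y₂ : Fin p → ℝ,
      Filter.Tendsto (fun k => (x₁ k, x₂ k)) Filter.atTop (nhds (y₁, y₂)) ∧
      B.mulVec y₁ + Bt.mulVec y₂ = b := by
  have hm' : (m : ℝ) ≠ 0 := Nat.cast_ne_zero.mpr hm.ne'
  -- row sums of Bt are positive
  have hnpos : ∀ i, 0 < ∑ j, |Bt i j| := by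
    intro i
    obtain ⟨j, hj⟩ := Function.ne_iff.mp (hRows i)
    exact Finset.sum_pos' (fun j _ => abs_nonneg _) ⟨j, Finset.mem_univ j, abs_pos.2 hj⟩
  -- explicit inverses of the diagonal matrices
  have hNinv : N⁻¹ = Matrix.diagonal (fun i => (∑ j, |Bt i j|)⁻¹) := by
    rw [hN]
    apply Matrix.inv_eq_left_inv
    rw [Matrix.diagonal_mul_diagonal]
    have h1 : (fun i => (∑ j, |Bt i j|)⁻¹ * ∑ j, |Bt i j|) = fun _ : Fin m => (1 : ℝ) :=
      funext fun i => inv_mul_cancel₀ (hnpos i).ne'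
    rw [h1, Matrix.diagonal_one]
  have hDinv : D⁻¹ = Matrix.diagonal (fun i => (B i i)⁻¹) := by
    rw [hD]
    apply Matrix.inv_eq_left_inv
    rw [Matrix.diagonal_mul_diagonal]
    have h1 : (fun i => (B i i)⁻¹ * B i i) = fun _ : Fin m => (1 : ℝ) :=
      funext fun i => inv_mul_cancel₀ (hDiag i)
    rw [h1, Matrix.diagonal_one]
  have hDD : D⁻¹ * D = 1 := by
    rw [hDinv, hD, Matrix.diagonal_mul_diagonal]
    have h1 : (fun i => (B i i)⁻¹ * B i i) = fun _ : Fin m => (1 : ℝ) :=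
      funext fun i => inv_mul_cancel₀ (hDiag i)
    rw [h1, Matrix.diagonal_one]
  -- the residual
  set r : ℕ → Fin m → ℝ := fun k => b - B.mulVec (x₁ k) - Bt.mulVec (x₂ k) with hrdef
  set M₁ : Matrix (Fin m) (Fin m) ℝ := 1 - B * D⁻¹ with hM₁
  set M₂ : Matrix (Fin m) (Fin m) ℝ := 1 - (1 / (m : ℝ)) • (Bt * s * N⁻¹) with hM₂
  have hdr : ∀ k, d k = (1 / (m : ℝ)) • (N⁻¹.mulVec (r k)) := by
    intro k
    funext i
    rw [hd k i, hNinv]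
    have : (Matrix.diagonal (fun i => (∑ j, |Bt i j|)⁻¹)).mulVec (r k) i
        = (∑ j, |Bt i j|)⁻¹ * r k i := Matrix.mulVec_diagonal _ _ i
    simp only [Pi.smul_apply, this, Matrix.mulVec_diagonal, smul_eq_mul, hrdef, Pi.sub_apply]
    rw [div_eq_mul_inv, mul_inv]
    ring
  have hBtx₂ : ∀ k, Bt.mulVec (x₂ (k + 1))
      = Bt.mulVec (x₂ k) + (1 / (m : ℝ)) • ((Bt * s * N⁻¹).mulVec (r k)) := by
    intro k
    rw [hx₂ k, Matrix.mulVec_add, hdr k, Matrix.mulVec_smul, Matrix.mulVec_smul,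
      Matrix.mulVec_mulVec, Matrix.mulVec_mulVec]
  have hM₂r : ∀ k, M₂.mulVec (r k) = r k - (1 / (m : ℝ)) • ((Bt * s * N⁻¹).mulVec (r k)) := by
    intro k
    rw [hM₂, Matrix.sub_mulVec, Matrix.one_mulVec, Matrix.smul_mulVec]
  have hx₁' : ∀ k, x₁ (k + 1) = x₁ k + D⁻¹.mulVec (M₂.mulVec (r k)) := by
    intro k
    rw [hx₁ k]
    have harg : -(R.mulVec (x₁ k)) + (b - Bt.mulVec (x₂ (k + 1)))
        = D.mulVec (x₁ k) + M₂.mulVec (r k) := by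
      rw [hM₂r k, hR, Matrix.sub_mulVec, hBtx₂ k]
      funext i
      simp only [Pi.add_apply, Pi.sub_apply, Pi.neg_apply, Pi.smul_apply, smul_eq_mul,
        hrdef]
      ring
    rw [harg, Matrix.mulVec_add, Matrix.mulVec_mulVec, hDD, Matrix.one_mulVec]
  have hrec : ∀ k, r (k + 1) = M₁.mulVec (M₂.mulVec (r k)) := by
    intro k
    have hBx₁ : B.mulVec (x₁ (k + 1))
        = B.mulVec (x₁ k) + (B * D⁻¹).mulVec (M₂.mulVec (r k)) := by
      rw [hx₁' k, Matrix.mulVec_add, Matrix.mulVec_mulVec]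
    have hM₁w : M₁.mulVec (M₂.mulVec (r k))
        = M₂.mulVec (r k) - (B * D⁻¹).mulVec (M₂.mulVec (r k)) := by
      rw [hM₁, Matrix.sub_mulVec, Matrix.one_mulVec]
    have goal1 : r (k + 1) = b - B.mulVec (x₁ (k + 1)) - Bt.mulVec (x₂ (k + 1)) := rfl
    rw [goal1, hBx₁, hBtx₂ k, hM₁w]
    set u : Fin m → ℝ := (B * D⁻¹).mulVec (M₂.mulVec (r k)) with hu
    rw [hM₂r k]
    funext i
    have hri : r k i = b i - B.mulVec (x₁ k) i - Bt.mulVec (x₂ k) i := rfl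
    simp only [Pi.sub_apply, Pi.add_apply, Pi.smul_apply, smul_eq_mul, hri]
    ring
  -- geometric decay of the residual
  set q : ℝ := matL1 M₁ * matL1 M₂ with hq
  have j₀ : Fin m := ⟨0, hm⟩
  have hM₁0 : 0 ≤ matL1 M₁ := matL1_nonneg M₁ j₀
  have hM₂0 : 0 ≤ matL1 M₂ := matL1_nonneg M₂ j₀
  have hq0 : 0 ≤ q := mul_nonneg hM₁0 hM₂0
  have hq1' : q < 1 := hq1
  have hrb : ∀ k, vecL1 (r k) ≤ q ^ k * vecL1 (r 0) := by
    intro k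
    induction k with
    | zero => simp
    | succ k ih =>
      rw [hrec k]
      calc vecL1 (M₁.mulVec (M₂.mulVec (r k)))
          ≤ matL1 M₁ * vecL1 (M₂.mulVec (r k)) := vecL1_mulVec_le _ _
        _ ≤ matL1 M₁ * (matL1 M₂ * vecL1 (r k)) :=
            mul_le_mul_of_nonneg_left (vecL1_mulVec_le _ _) hM₁0
        _ ≤ matL1 M₁ * (matL1 M₂ * (q ^ k * vecL1 (r 0))) :=
            mul_le_mul_of_nonneg_left (mul_le_mul_of_nonneg_left ih hM₂0) hM₁0
        _ = q ^ (k + 1) * vecL1 (r 0) := by rw [hq]; ring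
  -- increment bounds
  set C₁ : ℝ := matL1 D⁻¹ * (matL1 M₂ * vecL1 (r 0)) with hC₁
  set C₂ : ℝ := |1 / (m : ℝ)| * (matL1 (s * N⁻¹) * vecL1 (r 0)) with hC₂
  have hx₁b : ∀ k, vecL1 (x₁ (k + 1) - x₁ k) ≤ C₁ * q ^ k := by
    intro k
    have h1 : x₁ (k + 1) - x₁ k = D⁻¹.mulVec (M₂.mulVec (r k)) := by
      rw [hx₁' k]; ring_nf
    rw [h1]
    calc vecL1 (D⁻¹.mulVec (M₂.mulVec (r k)))
        ≤ matL1 D⁻¹ * vecL1 (M₂.mulVec (r k)) := vecL1_mulVec_le _ _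
      _ ≤ matL1 D⁻¹ * (matL1 M₂ * vecL1 (r k)) :=
          mul_le_mul_of_nonneg_left (vecL1_mulVec_le _ _) (matL1_nonneg _ j₀)
      _ ≤ matL1 D⁻¹ * (matL1 M₂ * (q ^ k * vecL1 (r 0))) :=
          mul_le_mul_of_nonneg_left (mul_le_mul_of_nonneg_left (hrb k) hM₂0)
            (matL1_nonneg _ j₀)
      _ = C₁ * q ^ k := by rw [hC₁]; ring
  have hx₂b : ∀ k, vecL1 (x₂ (k + 1) - x₂ k) ≤ C₂ * q ^ k := by
    intro k
    have h1 : x₂ (k + 1) - x₂ k = (1 / (m : ℝ)) • ((s * N⁻¹).mulVec (r k)) := by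
      rw [hx₂ k, hdr k, Matrix.mulVec_smul, Matrix.mulVec_mulVec]; ring_nf
    rw [h1, vecL1_smul]
    calc |1 / (m : ℝ)| * vecL1 ((s * N⁻¹).mulVec (r k))
        ≤ |1 / (m : ℝ)| * (matL1 (s * N⁻¹) * vecL1 (r k)) :=
          mul_le_mul_of_nonneg_left (vecL1_mulVec_le _ _) (abs_nonneg _)
      _ ≤ |1 / (m : ℝ)| * (matL1 (s * N⁻¹) * (q ^ k * vecL1 (r 0))) :=
          mul_le_mul_of_nonneg_left (mul_le_mul_of_nonneg_left (hrb k) (matL1_nonneg _ j₀))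
            (abs_nonneg _)
      _ = C₂ * q ^ k := by rw [hC₂]; ring
  have hC₁0 : 0 ≤ C₁ := mul_nonneg (matL1_nonneg _ j₀) (mul_nonneg hM₂0 (vecL1_nonneg _))
  have hC₂0 : 0 ≤ C₂ :=
    mul_nonneg (abs_nonneg _) (mul_nonneg (matL1_nonneg _ j₀) (vecL1_nonneg _))
  set C : ℝ := max C₁ C₂ with hC
  have hC0 : 0 ≤ C := le_trans hC₁0 (le_max_left _ _)
  have hqk : ∀ k : ℕ, (0:ℝ) ≤ q ^ k := fun k => pow_nonneg hq0 k
  -- distance bound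
  have hdist : ∀ k, dist ((x₁ k, x₂ k)) ((x₁ (k + 1), x₂ (k + 1))) ≤ C * q ^ k := by
    intro k
    have hCq : 0 ≤ C * q ^ k := mul_nonneg hC0 (hqk k)
    rw [Prod.dist_eq]
    apply max_le
    · rw [dist_pi_le_iff hCq]
      intro i
      calc dist (x₁ k i) (x₁ (k + 1) i) = |(x₁ (k + 1) - x₁ k) i| := by
            rw [Real.dist_eq, abs_sub_comm]; rfl
        _ ≤ vecL1 (x₁ (k + 1) - x₁ k) := abs_le_vecL1 _ i
        _ ≤ C₁ * q ^ k := hx₁b k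
        _ ≤ C * q ^ k := mul_le_mul_of_nonneg_right (le_max_left _ _) (hqk k)
    · rw [dist_pi_le_iff hCq]
      intro i
      calc dist (x₂ k i) (x₂ (k + 1) i) = |(x₂ (k + 1) - x₂ k) i| := by
            rw [Real.dist_eq, abs_sub_comm]; rfl
        _ ≤ vecL1 (x₂ (k + 1) - x₂ k) := abs_le_vecL1 _ i
        _ ≤ C₂ * q ^ k := hx₂b k
        _ ≤ C * q ^ k := mul_le_mul_of_nonneg_right (le_max_right _ _) (hqk k)
  have hcauchy : CauchySeq (fun k => (x₁ k, x₂ k)) :=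
    cauchySeq_of_le_geometric q C hq1' hdist
  refine ⟨hcauchy, ?_⟩
  obtain ⟨y, hy⟩ := cauchySeq_tendsto_of_complete hcauchy
  refine ⟨y.1, y.2, by simpa using hy, ?_⟩
  -- limits of the two components
  have hy1 : Filter.Tendsto x₁ Filter.atTop (nhds y.1) :=
    (continuous_fst.tendsto y).comp hy
  have hy2 : Filter.Tendsto x₂ Filter.atTop (nhds y.2) :=
    (continuous_snd.tendsto y).comp hy
  -- continuity of matrix-vector multiplication
  have hcB : Continuous (fun v : Fin m → ℝ => B.mulVec v) := by
    have := B.mulVecLin.continuous_of_finiteDimensional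
    exact this
  have hcBt : Continuous (fun v : Fin p → ℝ => Bt.mulVec v) := by
    have := Bt.mulVecLin.continuous_of_finiteDimensional
    exact this
  have h1 : Filter.Tendsto (fun k => B.mulVec (x₁ k)) Filter.atTop (nhds (B.mulVec y.1)) :=
    (hcB.tendsto y.1).comp hy1
  have h2 : Filter.Tendsto (fun k => Bt.mulVec (x₂ k)) Filter.atTop (nhds (Bt.mulVec y.2)) :=
    (hcBt.tendsto y.2).comp hy2
  have hsum : Filter.Tendsto (fun k => B.mulVec (x₁ k) + Bt.mulVec (x₂ k)) Filter.atTop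
      (nhds (B.mulVec y.1 + Bt.mulVec y.2)) := h1.add h2
  -- the residual tends to 0
  have hr0 : Filter.Tendsto r Filter.atTop (nhds 0) := by
    rw [tendsto_pi_nhds]
    intro i
    have hg : Filter.Tendsto (fun k : ℕ => q ^ k * vecL1 (r 0)) Filter.atTop (nhds 0) := by
      have := (tendsto_pow_atTop_nhds_zero_of_lt_one hq0 hq1').mul_const (vecL1 (r 0))
      simpa using this
    have hb' : ∀ k, ‖r k i‖ ≤ q ^ k * vecL1 (r 0) := fun k =>
      le_trans (abs_le_vecL1 (r k) i) (hrb k)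
    simpa using squeeze_zero_norm hb' hg
  have hsum' : Filter.Tendsto (fun k => B.mulVec (x₁ k) + Bt.mulVec (x₂ k)) Filter.atTop
      (nhds b) := by
    have heq : (fun k => B.mulVec (x₁ k) + Bt.mulVec (x₂ k)) = fun k => b - r k := by
      funext k i
      simp only [hrdef, Pi.sub_apply, Pi.add_apply]
      ring
    rw [heq]
    have := (tendsto_const_nhds (x := b) (f := Filter.atTop (α := ℕ))).sub hr0
    simpa using this
  exact tendsto_nhds_unique hsum hsum'
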